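/- Let d ≥ 1 be an integer, α ∈ (0, d), and let r, p satisfy α ≤ r, 1 < r < p ≤ d. Set p_0 = (r+p)/2 and p_1 = (r+p_0)/2. Let b : ℝ^d → [0,∞) be measurable and A ≥ 0 satisfy ∫_B b^p dx ≤ A^p ρ^{d - pα} for every ρ > 0 and every ball B of radius ρ. Define b̃ = (𝕄(b^{p_0}))^{1/p_0}. Then for every x ∈ ℝ^d and ρ > 0, ∫_{B_ρ(x)} b̃^{p_1} dy ≤ N ρ^{d - p_1 α} A^{p_1}, i.e. b̃ satisfies the Morrey condition with exponent p_1 and constant N^{1/p_1} A, where N depends only on α, d, r, p. -/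

import Mathlib

open MeasureTheory Metric ENNReal
open scoped FourierTransform

/-- Riesz potential of an `ℝ≥0∞`-valued function:
`R_α g (x) = ∫ g(x+y) |y|^(α-d) dy`. -/
noncomputable def riesz {d : ℕ} (α : ℝ) (g : EuclideanSpace ℝ (Fin d) → ℝ≥0∞)
    (x : EuclideanSpace ℝ (Fin d)) : ℝ≥0∞ :=
  ∫⁻ y, g (x + y) * ENNReal.ofReal (‖y‖ ^ (α - (d : ℝ)))

/-- Riesz potential of a real-valued function. -/
noncomputable def rieszR {d : ℕ} (α : ℝ) (f : EuclideanSpace ℝ (Fin d) → ℝ)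
    (x : EuclideanSpace ℝ (Fin d)) : ℝ :=
  ∫ y, f (x + y) * ‖y‖ ^ (α - (d : ℝ))

/-- Hardy–Littlewood maximal function: sup over balls containing `x`
of the average of `g` over the ball. -/
noncomputable def maxFun {d : ℕ} (g : EuclideanSpace ℝ (Fin d) → ℝ≥0∞)
    (x : EuclideanSpace ℝ (Fin d)) : ℝ≥0∞ :=
  ⨆ (z : EuclideanSpace ℝ (Fin d)) (r : ℝ) (_ : x ∈ ball z r),
    (∫⁻ y in ball z r, g y) / volume (ball z r)

section Aux

variable {d : ℕ}

lemma avg_le_maxFun (g : EuclideanSpace ℝ (Fin d) → ℝ≥0∞) {y z : EuclideanSpace ℝ (Fin d)}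
    {s : ℝ} (hy : y ∈ ball z s) :
    (∫⁻ w in ball z s, g w) / volume (ball z s) ≤ maxFun g y := by
  refine le_trans ?_ (le_iSup _ z)
  refine le_trans ?_ (le_iSup _ s)
  exact le_iSup (fun _ : y ∈ ball z s => (∫⁻ w in ball z s, g w) / volume (ball z s)) hy

lemma maxFun_gt_iff (g : EuclideanSpace ℝ (Fin d) → ℝ≥0∞) (L : ℝ≥0∞)
    (y : EuclideanSpace ℝ (Fin d)) :
    L < maxFun g y ↔ ∃ z s, y ∈ ball z s ∧
      L < (∫⁻ w in ball z s, g w) / volume (ball z s) := by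
  constructor
  · intro h
    rw [maxFun] at h
    obtain ⟨z, hz⟩ := lt_iSup_iff.1 h
    obtain ⟨s, hs⟩ := lt_iSup_iff.1 hz
    obtain ⟨hy, h2⟩ := lt_iSup_iff.1 hs
    exact ⟨z, s, hy, h2⟩
  · rintro ⟨z, s, hy, h2⟩
    exact h2.trans_le (avg_le_maxFun g hy)

lemma isOpen_maxFun_gt (g : EuclideanSpace ℝ (Fin d) → ℝ≥0∞) (L : ℝ≥0∞) :
    IsOpen {y | L < maxFun g y} := by
  have : {y | L < maxFun g y} = ⋃ (z : EuclideanSpace ℝ (Fin d)) (s : ℝ)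
      (_ : L < (∫⁻ w in ball z s, g w) / volume (ball z s)), ball z s := by
    ext y
    simp only [Set.mem_setOf_eq, Set.mem_iUnion, maxFun_gt_iff]
    tauto
  rw [this]
  exact isOpen_iUnion fun z => isOpen_iUnion fun s => isOpen_iUnion fun _ => isOpen_ball

lemma measurable_maxFun (g : EuclideanSpace ℝ (Fin d) → ℝ≥0∞) :
    Measurable (maxFun g) := by
  apply measurable_of_Ioi
  intro L
  exact (isOpen_maxFun_gt g L).measurableSet

lemma vol_ball (z : EuclideanSpace ℝ (Fin d)) {s : ℝ} (hs : 0 < s) :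
    volume (ball z s) = ENNReal.ofReal (s ^ d) * volume (ball (0 : EuclideanSpace ℝ (Fin d)) 1) := by
  rw [Measure.addHaar_ball_of_pos volume z hs, finrank_euclideanSpace_fin]

lemma vol_closedBall (z : EuclideanSpace ℝ (Fin d)) {s : ℝ} (hs : 0 ≤ s) :
    volume (closedBall z s) =
      ENNReal.ofReal (s ^ d) * volume (ball (0 : EuclideanSpace ℝ (Fin d)) 1) := by
  rw [Measure.addHaar_closedBall volume z hs, finrank_euclideanSpace_fin]

lemma weak11 (hd : 1 ≤ d) (g : EuclideanSpace ℝ (Fin d) → ℝ≥0∞) (hg : Measurable g)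
    (hI : ∫⁻ y, g y ≠ ∞) {L : ℝ≥0∞} (hL0 : L ≠ 0) (hLt : L ≠ ∞) :
    volume {y | L < maxFun g y} ≤ ENNReal.ofReal (4 ^ d) * (∫⁻ y, g y) * L⁻¹ := by
  classical
  set I := ∫⁻ y, g y with hIdef
  set c := volume (ball (0 : EuclideanSpace ℝ (Fin d)) 1) with hcdef
  have hc0 : c ≠ 0 := (measure_ball_pos volume 0 one_pos).ne'
  have hct : c ≠ ∞ := measure_ball_lt_top.ne
  set t : Set (EuclideanSpace ℝ (Fin d) × ℝ) := {a | 0 < a.2 ∧ L * volume (ball a.1 a.2) < ∫⁻ w in ball a.1 a.2, g w}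
    with htdef
  set K := I / (L * c) with hKdef
  have hLc0 : L * c ≠ 0 := mul_ne_zero hL0 hc0
  have hLct : L * c ≠ ∞ := ENNReal.mul_ne_top hLt hct
  have hKt : K ≠ ∞ := (ENNReal.div_lt_top hI hLc0).ne
  have hrad : ∀ a ∈ t, a.2 ≤ max 1 K.toReal := by
    rintro ⟨z, s⟩ ⟨hs, ha⟩
    have hv : volume (ball z s) ≤ I / L := by
      rw [ENNReal.le_div_iff_mul_le (Or.inl hL0) (Or.inl hLt), mul_comm]
      exact le_trans ha.le (setLIntegral_le_lintegral _ _)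
    rw [vol_ball z hs] at hv
    have hsd : ENNReal.ofReal (s ^ d) ≤ K := by
      rw [hKdef, ENNReal.le_div_iff_mul_le (Or.inl hLc0) (Or.inl hLct)]
      calc ENNReal.ofReal (s ^ d) * (L * c) = L * (ENNReal.ofReal (s ^ d) * c) := by ring
        _ ≤ L * (I / L) := mul_le_mul_right hv L
        _ = I := ENNReal.mul_div_cancel' (fun h => absurd h hL0) (fun h => absurd h hLt)
    have hsd' : s ^ d ≤ K.toReal := by
      rw [← ENNReal.ofReal_le_iff_le_toReal hKt] at *
      exact hsd
    rcases le_or_gt s 1 with h1 | h1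
    · exact le_max_of_le_left h1
    · refine le_max_of_le_right (le_trans ?_ hsd')
      calc s = s ^ 1 := (pow_one s).symm
        _ ≤ s ^ d := pow_le_pow_right₀ h1.le hd
  obtain ⟨u, hut, hdisj, hcov⟩ :=
    Vitali.exists_disjoint_subfamily_covering_enlargement_closedBall t Prod.fst Prod.snd
      (max 1 K.toReal) hrad 4 (by norm_num)
  have hcnt : u.Countable := by
    have hpos : ∀ b : u, 0 < volume (closedBall (b.1.1) (b.1.2)) := by
      rintro ⟨b, hb⟩
      have hb2 : 0 < b.2 := (hut hb).1
      exact lt_of_lt_of_le (measure_ball_pos volume _ hb2) (measure_mono ball_subset_closedBall)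
    have hdisj' : Pairwise (Function.onFun Disjoint fun b : u => closedBall (b.1.1) (b.1.2)) := by
      intro i j hij
      exact hdisj i.2 j.2 (fun h => hij (Subtype.ext h))
    have := MeasureTheory.Measure.countable_meas_pos_of_disjoint_iUnion
      (μ := volume) (As := fun b : u => closedBall (b.1.1) (b.1.2))
      (fun _ => measurableSet_closedBall) hdisj'
    have huniv : {i : u | 0 < volume (closedBall (i.1.1) (i.1.2))} = Set.univ :=
      Set.eq_univ_of_forall hpos
    rw [huniv] at this
    rw [← Set.countable_coe_iff]
    exact Set.countable_univ_iff.mp this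
  haveI : Countable u := hcnt.to_subtype
  have hsub : {y | L < maxFun g y} ⊆ ⋃ b : u, closedBall (b.1.1) (4 * b.1.2) := by
    intro y hy
    obtain ⟨z, s, hyz, havg⟩ := (maxFun_gt_iff g L y).1 hy
    have hs : 0 < s := pos_of_mem_ball hyz
    have hv0 : volume (ball z s) ≠ 0 := (measure_ball_pos volume _ hs).ne'
    have hvt : volume (ball z s) ≠ ∞ := measure_ball_lt_top.ne
    have hzt : (z, s) ∈ t := by
      refine ⟨hs, ?_⟩
      rw [ENNReal.lt_div_iff_mul_lt (Or.inl hv0) (Or.inl hvt)] at havg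
      exact havg
    obtain ⟨b, hbu, hbsub⟩ := hcov (z, s) hzt
    exact Set.mem_iUnion.2 ⟨⟨b, hbu⟩, hbsub (ball_subset_closedBall hyz)⟩
  calc volume {y | L < maxFun g y} ≤ volume (⋃ b : u, closedBall (b.1.1) (4 * b.1.2)) :=
        measure_mono hsub
    _ ≤ ∑' b : u, volume (closedBall (b.1.1) (4 * b.1.2)) := measure_iUnion_le _
    _ ≤ ∑' b : u, ENNReal.ofReal (4 ^ d) * ((∫⁻ w in ball (b.1.1) (b.1.2), g w) * L⁻¹) := by
        refine ENNReal.tsum_le_tsum fun b => ?_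
        have hb2 : 0 < b.1.2 := (hut b.2).1
        have hb' := (hut b.2).2
        have hball : volume (ball (b.1.1) (b.1.2)) ≤ (∫⁻ w in ball (b.1.1) (b.1.2), g w) * L⁻¹ := by
          rw [← div_eq_mul_inv, ENNReal.le_div_iff_mul_le (Or.inl hL0) (Or.inl hLt),
            mul_comm]
          exact hb'.le
        calc volume (closedBall (b.1.1) (4 * b.1.2))
            = ENNReal.ofReal ((4 * b.1.2) ^ d) * c := vol_closedBall _ (by positivity)
          _ = ENNReal.ofReal (4 ^ d) * (ENNReal.ofReal (b.1.2 ^ d) * c) := by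
              rw [mul_pow, ENNReal.ofReal_mul (by positivity), mul_assoc]
          _ = ENNReal.ofReal (4 ^ d) * volume (ball (b.1.1) (b.1.2)) := by
              rw [vol_ball _ hb2]
          _ ≤ _ := by gcongr
    _ = ENNReal.ofReal (4 ^ d) * ((∑' b : u, ∫⁻ w in ball (b.1.1) (b.1.2), g w) * L⁻¹) := by
        rw [ENNReal.tsum_mul_left, ENNReal.tsum_mul_right]
    _ ≤ ENNReal.ofReal (4 ^ d) * (I * L⁻¹) := by
        gcongr
        have hdisjb : Pairwise (Function.onFun Disjoint fun b : u => ball (b.1.1) (b.1.2)) := by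
          intro i j hij
          exact Disjoint.mono ball_subset_closedBall ball_subset_closedBall
            (hdisj i.2 j.2 (fun h => hij (Subtype.ext h)))
        rw [← lintegral_iUnion (fun b => measurableSet_ball) hdisjb g]
        exact setLIntegral_le_lintegral _ _
    _ = ENNReal.ofReal (4 ^ d) * I * L⁻¹ := (mul_assoc _ _ _).symm

lemma kolmogorov (hd : 1 ≤ d) (g : EuclideanSpace ℝ (Fin d) → ℝ≥0∞) (hg : Measurable g)
    (hI : ∫⁻ y, g y ≠ ∞) {θ : ℝ} (hθ0 : 0 < θ) (hθ1 : θ < 1)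
    {S : Set (EuclideanSpace ℝ (Fin d))} (hS : MeasurableSet S)
    {l : ℝ≥0∞} (hl0 : l ≠ 0) (hlt : l ≠ ∞) :
    ∫⁻ y in S, (maxFun g y) ^ θ ≤ l ^ θ * volume S +
      ENNReal.ofReal (4 ^ d) * (2 : ℝ≥0∞) ^ θ * (1 - (2 : ℝ≥0∞) ^ (θ - 1))⁻¹ *
        (∫⁻ y, g y) * l ^ (θ - 1) := by
  classical
  set F := maxFun g with hF
  have hFm : Measurable F := measurable_maxFun g
  set I := ∫⁻ y, g y with hIdef
  set S0 : Set (EuclideanSpace ℝ (Fin d)) := S ∩ {y | F y ≤ l} with hS0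
  set W : Set (EuclideanSpace ℝ (Fin d)) := S ∩ {y | F y = ∞} with hW
  set V : ℕ → Set (EuclideanSpace ℝ (Fin d)) :=
    fun k => S ∩ {y | 2 ^ k * l < F y ∧ F y ≤ 2 ^ (k + 1) * l} with hV
  have hcover : S ⊆ S0 ∪ (W ∪ ⋃ k, V k) := by
    intro y hy
    rcases le_or_gt (F y) l with h1 | h1
    · exact Or.inl ⟨hy, h1⟩
    rcases eq_or_ne (F y) ∞ with h2 | h2
    · exact Or.inr (Or.inl ⟨hy, h2⟩)
    have hex : ∃ n : ℕ, F y ≤ 2 ^ n * l := by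
      obtain ⟨n, hn⟩ := ENNReal.exists_nat_gt (r := F y / l) (by
        exact (ENNReal.div_lt_top h2 hl0).ne)
      refine ⟨n, ?_⟩
      have h2n : (n : ℝ≥0∞) ≤ 2 ^ n := by
        exact_mod_cast (@Nat.lt_two_pow_self n).le
      have : F y / l ≤ 2 ^ n := le_trans hn.le h2n
      rwa [ENNReal.div_le_iff_le_mul (Or.inl hl0) (Or.inl hlt)] at this
    set n := Nat.find hex with hn
    have hn1 : 1 ≤ n := by
      rcases Nat.eq_zero_or_pos n with h | h
      · exfalso
        have := Nat.find_spec hex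
        rw [← hn, h] at this
        simp only [pow_zero, one_mul] at this
        exact absurd this (not_le.2 h1)
      · exact h
    refine Or.inr (Or.inr (Set.mem_iUnion.2 ⟨n - 1, hy, ?_, ?_⟩))
    · have := Nat.find_min hex (m := n - 1) (by omega)
      push_neg at this
      exact this
    · have := Nat.find_spec hex
      rw [← hn] at this
      rwa [Nat.sub_add_cancel hn1]
  have hWnull : volume W = 0 := by
    by_contra h
    have hW0 : volume W ≠ 0 := h
    obtain ⟨n, hn⟩ := ENNReal.exists_nat_mul_gt hW0
      (b := ENNReal.ofReal (4 ^ d) * I) (by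
        exact ENNReal.mul_ne_top (by simp) hI)
    have hn0 : n ≠ 0 := by
      rintro rfl
      simp at hn
    have hle : volume W ≤ ENNReal.ofReal (4 ^ d) * I * (n : ℝ≥0∞)⁻¹ := by
      refine le_trans (measure_mono ?_) (weak11 hd g hg hI (L := (n : ℝ≥0∞))
        (by exact_mod_cast hn0) (by simp))
      rintro y ⟨-, hy⟩
      have : maxFun g y = ∞ := hy
      simp only [Set.mem_setOf_eq, this]
      exact ENNReal.natCast_lt_top n
    have : (n : ℝ≥0∞) * volume W ≤ ENNReal.ofReal (4 ^ d) * I := by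
      calc (n : ℝ≥0∞) * volume W ≤ (n : ℝ≥0∞) * (ENNReal.ofReal (4 ^ d) * I * (n : ℝ≥0∞)⁻¹) :=
            mul_le_mul_right hle _
        _ = ENNReal.ofReal (4 ^ d) * I * ((n : ℝ≥0∞) * (n : ℝ≥0∞)⁻¹) := by ring
        _ = ENNReal.ofReal (4 ^ d) * I := by
            rw [ENNReal.mul_inv_cancel (by exact_mod_cast hn0) (by simp), mul_one]
    exact absurd this (not_le.2 hn)
  have hdecomp : ∫⁻ y in S, F y ^ θ ≤
      (∫⁻ y in S0, F y ^ θ) + ((∫⁻ y in W, F y ^ θ) + ∑' k, ∫⁻ y in V k, F y ^ θ) := by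
    calc ∫⁻ y in S, F y ^ θ ≤ ∫⁻ y in S0 ∪ (W ∪ ⋃ k, V k), F y ^ θ :=
          lintegral_mono_set hcover
      _ ≤ (∫⁻ y in S0, F y ^ θ) + ∫⁻ y in W ∪ ⋃ k, V k, F y ^ θ := lintegral_union_le _ _ _
      _ ≤ _ := by
          gcongr
          refine le_trans (lintegral_union_le _ _ _) ?_
          gcongr
          exact lintegral_iUnion_le _ _
  have hS0term : ∫⁻ y in S0, F y ^ θ ≤ l ^ θ * volume S := by
    have hS0m : MeasurableSet S0 := hS.inter (hFm measurableSet_Iic)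
    calc ∫⁻ y in S0, F y ^ θ ≤ ∫⁻ _ in S0, l ^ θ := by
          refine setLIntegral_mono' hS0m fun y hy => ?_
          exact ENNReal.rpow_le_rpow hy.2 hθ0.le
      _ = l ^ θ * volume S0 := setLIntegral_const _ _
      _ ≤ l ^ θ * volume S := by gcongr; exact Set.inter_subset_left
  have hWterm : ∫⁻ y in W, F y ^ θ = 0 := by
    rw [Measure.restrict_eq_zero.2 hWnull, lintegral_zero_measure]
  have hVterm : ∀ k : ℕ, ∫⁻ y in V k, F y ^ θ ≤
      ((2 : ℝ≥0∞) ^ (k + 1) * l) ^ θ * (ENNReal.ofReal (4 ^ d) * I * ((2 : ℝ≥0∞) ^ k * l)⁻¹) := by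
    intro k
    have hVm : MeasurableSet (V k) := by
      refine hS.inter ?_
      exact (hFm measurableSet_Ioi).inter (hFm measurableSet_Iic)
    have h2kl0 : (2 : ℝ≥0∞) ^ k * l ≠ 0 := by
      exact mul_ne_zero (pow_ne_zero k two_ne_zero) hl0
    have h2klt : (2 : ℝ≥0∞) ^ k * l ≠ ∞ := ENNReal.mul_ne_top (by simp) hlt
    calc ∫⁻ y in V k, F y ^ θ ≤ ∫⁻ _ in V k, ((2 : ℝ≥0∞) ^ (k + 1) * l) ^ θ := by
          refine setLIntegral_mono' hVm fun y hy => ?_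
          exact ENNReal.rpow_le_rpow hy.2.2 hθ0.le
      _ = ((2 : ℝ≥0∞) ^ (k + 1) * l) ^ θ * volume (V k) := setLIntegral_const _ _
      _ ≤ ((2 : ℝ≥0∞) ^ (k + 1) * l) ^ θ * (ENNReal.ofReal (4 ^ d) * I * ((2 : ℝ≥0∞) ^ k * l)⁻¹) := by
          gcongr
          refine le_trans (measure_mono ?_) (weak11 hd g hg hI h2kl0 h2klt)
          rintro y ⟨-, hy1, -⟩
          exact hy1
  have hterm_eq : ∀ k : ℕ,
      ((2 : ℝ≥0∞) ^ (k + 1) * l) ^ θ * (ENNReal.ofReal (4 ^ d) * I * ((2 : ℝ≥0∞) ^ k * l)⁻¹) =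
      ((2 : ℝ≥0∞) ^ θ * l ^ (θ - 1) * (ENNReal.ofReal (4 ^ d) * I)) *
        ((2 : ℝ≥0∞) ^ (θ - 1)) ^ k := by
    intro k
    have h2 : (2 : ℝ≥0∞) ≠ 0 := two_ne_zero
    have h2t : (2 : ℝ≥0∞) ≠ ∞ := ENNReal.ofNat_ne_top
    have e1 : ((2 : ℝ≥0∞) ^ (k + 1) * l) ^ θ =
        (2 : ℝ≥0∞) ^ (((k : ℝ) + 1) * θ) * l ^ θ := by
      rw [ENNReal.mul_rpow_of_nonneg _ _ hθ0.le]
      congr 1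
      rw [← ENNReal.rpow_natCast 2 (k + 1), ← ENNReal.rpow_mul]
      push_cast
      ring_nf
    have e2 : ((2 : ℝ≥0∞) ^ k * l)⁻¹ = (2 : ℝ≥0∞) ^ (-(k : ℝ)) * l ^ (-1 : ℝ) := by
      rw [ENNReal.mul_inv (Or.inl (pow_ne_zero k h2)) (Or.inl (ENNReal.pow_ne_top h2t)),
        ENNReal.rpow_neg_one, ← ENNReal.rpow_natCast 2 k, ← ENNReal.rpow_neg]
    have e3 : ((2 : ℝ≥0∞) ^ (θ - 1)) ^ k = (2 : ℝ≥0∞) ^ ((θ - 1) * (k : ℝ)) := by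
      rw [ENNReal.rpow_mul, ENNReal.rpow_natCast]
    rw [e1, e2, e3]
    have e4 : (2 : ℝ≥0∞) ^ (((k : ℝ) + 1) * θ) * (2 : ℝ≥0∞) ^ (-(k : ℝ)) =
        (2 : ℝ≥0∞) ^ θ * (2 : ℝ≥0∞) ^ ((θ - 1) * (k : ℝ)) := by
      rw [← ENNReal.rpow_add _ _ h2 h2t, ← ENNReal.rpow_add _ _ h2 h2t]
      ring_nf
    have e5 : l ^ θ * l ^ (-1 : ℝ) = l ^ (θ - 1) := by
      rw [← ENNReal.rpow_add _ _ hl0 hlt]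
      ring_nf
    calc (2 : ℝ≥0∞) ^ (((k : ℝ) + 1) * θ) * l ^ θ *
          (ENNReal.ofReal (4 ^ d) * I * ((2 : ℝ≥0∞) ^ (-(k : ℝ)) * l ^ (-1 : ℝ))) =
        ((2 : ℝ≥0∞) ^ (((k : ℝ) + 1) * θ) * (2 : ℝ≥0∞) ^ (-(k : ℝ))) * (l ^ θ * l ^ (-1 : ℝ)) *
          (ENNReal.ofReal (4 ^ d) * I) := by ring
      _ = ((2 : ℝ≥0∞) ^ θ * (2 : ℝ≥0∞) ^ ((θ - 1) * (k : ℝ))) * l ^ (θ - 1) *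
          (ENNReal.ofReal (4 ^ d) * I) := by rw [e4, e5]
      _ = _ := by ring
  have hsum : ∑' k, ∫⁻ y in V k, F y ^ θ ≤
      ENNReal.ofReal (4 ^ d) * (2 : ℝ≥0∞) ^ θ * (1 - (2 : ℝ≥0∞) ^ (θ - 1))⁻¹ * I * l ^ (θ - 1) := by
    calc ∑' k, ∫⁻ y in V k, F y ^ θ
        ≤ ∑' k, ((2 : ℝ≥0∞) ^ θ * l ^ (θ - 1) * (ENNReal.ofReal (4 ^ d) * I)) *
            ((2 : ℝ≥0∞) ^ (θ - 1)) ^ k := by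
          refine ENNReal.tsum_le_tsum fun k => ?_
          rw [← hterm_eq k]
          exact hVterm k
      _ = ((2 : ℝ≥0∞) ^ θ * l ^ (θ - 1) * (ENNReal.ofReal (4 ^ d) * I)) *
            (1 - (2 : ℝ≥0∞) ^ (θ - 1))⁻¹ := by
          rw [ENNReal.tsum_mul_left, ENNReal.tsum_geometric]
      _ = _ := by ring
  calc ∫⁻ y in S, F y ^ θ ≤ _ := hdecomp
    _ ≤ l ^ θ * volume S +
        (0 + ENNReal.ofReal (4 ^ d) * (2 : ℝ≥0∞) ^ θ * (1 - (2 : ℝ≥0∞) ^ (θ - 1))⁻¹ * I *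
          l ^ (θ - 1)) := add_le_add hS0term (add_le_add hWterm.le hsum)
    _ = _ := by rw [zero_add]

/-- `∫_S f^θ ≤ (∫_S f)^θ (μ S)^(1-θ)` for `θ ∈ (0,1)`. -/
lemma lintegral_rpow_le {α : Type*} [MeasurableSpace α] (μ : Measure α)
    {f : α → ℝ≥0∞} (hf : AEMeasurable f μ) {θ : ℝ} (hθ0 : 0 < θ) (hθ1 : θ < 1)
    (S : Set α) :
    ∫⁻ y in S, f y ^ θ ∂μ ≤ (∫⁻ y in S, f y ∂μ) ^ θ * (μ S) ^ (1 - θ) := by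
  have hpq : (1 / θ).HolderConjugate (1 / (1 - θ)) := by
    rw [Real.holderConjugate_iff]
    constructor
    · rw [lt_div_iff₀ hθ0, one_mul]
      exact hθ1
    · rw [one_div, inv_inv, one_div, inv_inv]
      ring
  have h := ENNReal.lintegral_mul_le_Lp_mul_Lq (μ.restrict S) hpq
    (f := fun y => f y ^ θ) (g := fun _ => 1)
    ((hf.restrict).pow_const θ) aemeasurable_const
  simp only [Pi.mul_apply, mul_one, ENNReal.one_rpow, lintegral_const,
    Measure.restrict_apply MeasurableSet.univ, Set.univ_inter, one_mul] at h
  have e1 : ∀ y : α, (f y ^ θ) ^ (1 / θ) = f y := by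
    intro y
    rw [← ENNReal.rpow_mul, mul_one_div, div_self hθ0.ne', ENNReal.rpow_one]
  simp only [e1] at h
  have e2 : (1:ℝ) / (1 / θ) = θ := by rw [one_div_one_div]
  have e3 : (1:ℝ) / (1 / (1 - θ)) = 1 - θ := by rw [one_div_one_div]
  rw [e2, e3] at h
  exact h

end Aux

/-- **Estimate (0.5).** With `p₀ = (r+p)/2`, `p₁ = (r+p₀)/2` and
`b̃ = (𝕄(b^(p₀)))^(1/p₀)`, the Morrey condition on `b` with exponent `p` implies
`∫_{B_ρ(x)} b̃^(p₁) ≤ N ρ^(d - p₁α) A^(p₁)` with `N = N(α,d,r,p)`. -/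
theorem maximal_morrey_transfer
    (d : ℕ) (hd : 1 ≤ d) (α r p : ℝ) (hα0 : 0 < α) (hαd : α < d)
    (hαr : α ≤ r) (hr : 1 < r) (hrp : r < p) (hpd : p ≤ d)
    (p₀ p₁ : ℝ) (hp₀ : p₀ = (r + p) / 2) (hp₁ : p₁ = (r + p₀) / 2) :
    ∃ N : ℝ, 0 < N ∧
      ∀ b : EuclideanSpace ℝ (Fin d) → ℝ, Measurable b → (∀ x, 0 ≤ b x) →
      ∀ A : ℝ, 0 ≤ A →
      (∀ (x : EuclideanSpace ℝ (Fin d)) (ρ : ℝ), 0 < ρ →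
        ∫⁻ y in ball x ρ, ENNReal.ofReal (b y ^ p) ≤
          ENNReal.ofReal (A ^ p * ρ ^ ((d : ℝ) - p * α))) →
      ∀ (x : EuclideanSpace ℝ (Fin d)) (ρ : ℝ), 0 < ρ →
        -- `b̃ ^ p₁ = (𝕄(b^(p₀))) ^ (p₁/p₀)`
        ∫⁻ y in ball x ρ,
            (maxFun (fun z => ENNReal.ofReal (b z ^ p₀)) y) ^ (p₁ / p₀) ≤
          ENNReal.ofReal (N * ρ ^ ((d : ℝ) - p₁ * α) * A ^ p₁) := by
  -- exponent facts
  have hp0pos : 0 < p₀ := by rw [hp₀]; linarith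
  have hp1pos : 0 < p₁ := by rw [hp₁]; linarith
  have hrp0 : r < p₀ := by rw [hp₀]; linarith
  have hp0p : p₀ < p := by rw [hp₀]; linarith
  have hrp1 : r < p₁ := by rw [hp₁]; linarith
  have hp1p0 : p₁ < p₀ := by rw [hp₁]; linarith
  have hppos : 0 < p := by linarith
  set θ' : ℝ := p₀ / p with hθ'def
  set θ : ℝ := p₁ / p₀ with hθdef
  have hθ'0 : 0 < θ' := div_pos hp0pos hppos
  have hθ'1 : θ' < 1 := (div_lt_one hppos).2 hp0p
  have hθ0 : 0 < θ := div_pos hp1pos hp0pos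
  have hθ1 : θ < 1 := (div_lt_one hp0pos).2 hp1p0
  have hpθ' : p * θ' = p₀ := by rw [hθ'def]; field_simp
  have hp0θ : p₀ * θ = p₁ := by rw [hθdef]; field_simp
  -- constants
  set c := volume (ball (0 : EuclideanSpace ℝ (Fin d)) 1) with hcdef
  have hc0 : c ≠ 0 := (measure_ball_pos volume 0 one_pos).ne'
  have hct : c ≠ ∞ := measure_ball_lt_top.ne
  set Ch : ℝ≥0∞ := c ^ (1 - θ') with hChdef
  have hCht : Ch ≠ ∞ := ENNReal.rpow_ne_top_of_nonneg (by linarith) hct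
  set Cd2 : ℝ≥0∞ := ENNReal.ofReal (4 ^ d) * (2 : ℝ≥0∞) ^ θ * (1 - (2 : ℝ≥0∞) ^ (θ - 1))⁻¹
    with hCd2def
  have hCd2t : Cd2 ≠ ∞ := by
    have h1 : (2 : ℝ≥0∞) ^ (θ - 1) < 1 :=
      ENNReal.rpow_lt_one_of_one_lt_of_neg (by norm_num) (by linarith)
    have h2 : (1 : ℝ≥0∞) - (2 : ℝ≥0∞) ^ (θ - 1) ≠ 0 := by
      rw [ne_eq, tsub_eq_zero_iff_le]
      exact not_le.2 h1
    refine ENNReal.mul_ne_top (ENNReal.mul_ne_top (by simp) ?_) (by simp [h2])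
    exact ENNReal.rpow_ne_top_of_nonneg hθ0.le ENNReal.ofNat_ne_top
  set Cfin : ℝ≥0∞ := c + Cd2 * Ch * ENNReal.ofReal ((3:ℝ) ^ ((d:ℝ) - p₀ * α)) +
    Ch ^ θ * (c⁻¹) ^ θ * c with hCfindef
  have hCfint : Cfin ≠ ∞ := by
    refine ENNReal.add_ne_top.2 ⟨ENNReal.add_ne_top.2 ⟨hct, ?_⟩, ?_⟩
    · exact ENNReal.mul_ne_top (ENNReal.mul_ne_top hCd2t hCht) (by simp)
    · refine ENNReal.mul_ne_top (ENNReal.mul_ne_top ?_ ?_) hct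
      · exact ENNReal.rpow_ne_top_of_nonneg hθ0.le hCht
      · exact ENNReal.rpow_ne_top_of_nonneg hθ0.le (by simp [hc0])
  refine ⟨Cfin.toReal + 1, by positivity, ?_⟩
  intro b hb hbnn A hA hMor x ρ hρ
  set g : EuclideanSpace ℝ (Fin d) → ℝ≥0∞ := fun z => ENNReal.ofReal (b z ^ p₀) with hgdef
  have hgmeas : Measurable g := (hb.pow measurable_const).ennreal_ofReal
  have hbpmeas : Measurable fun w => ENNReal.ofReal (b w ^ p) :=
    (hb.pow measurable_const).ennreal_ofReal
  rcases eq_or_lt_of_le hA with hA0 | hApos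
  · -- A = 0 : everything vanishes
    have hbz : ∀ z s, 0 < s → ∫⁻ w in ball z s, ENNReal.ofReal (b w ^ p) = 0 := by
      intro z s hs
      refine le_antisymm ?_ zero_le
      have := hMor z s hs
      rwa [← hA0, Real.zero_rpow hppos.ne', zero_mul, ENNReal.ofReal_zero] at this
    have hgz : ∀ z s, 0 < s → ∫⁻ w in ball z s, g w = 0 := by
      intro z s hs
      have h0 := hbz z s hs
      rw [lintegral_eq_zero_iff hbpmeas] at h0
      rw [lintegral_eq_zero_iff hgmeas]
      filter_upwards [h0] with w hw
      have hw' : ENNReal.ofReal (b w ^ p) = 0 := hw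
      have hble : b w ^ p ≤ 0 := ENNReal.ofReal_eq_zero.1 hw'
      have hbw : b w = 0 := by
        by_contra hne
        have h1 : 0 < b w := lt_of_le_of_ne (hbnn w) (Ne.symm hne)
        have h2 : 0 < b w ^ p := Real.rpow_pos_of_pos h1 p
        linarith
      show ENNReal.ofReal (b w ^ p₀) = 0
      rw [hbw, Real.zero_rpow hp0pos.ne', ENNReal.ofReal_zero]
    have hmz : ∀ y, maxFun g y = 0 := by
      intro y
      refine le_antisymm ?_ zero_le
      rw [maxFun]
      refine iSup_le fun z => iSup_le fun s => iSup_le fun hy => ?_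
      rw [hgz z s (pos_of_mem_ball hy), ENNReal.zero_div]
    have hLHS : ∫⁻ y in ball x ρ, (maxFun g y) ^ θ = 0 := by
      rw [lintegral_congr fun y => by rw [hmz y, ENNReal.zero_rpow_of_pos hθ0]]
      exact lintegral_zero
    exact le_trans (le_of_eq hLHS) zero_le
  -- A > 0
  have hgof : ∀ w, (ENNReal.ofReal (b w ^ p)) ^ θ' = g w := by
    intro w
    rw [ENNReal.ofReal_rpow_of_nonneg (Real.rpow_nonneg (hbnn w) p) hθ'0.le]
    congr 1
    rw [← Real.rpow_mul (hbnn w), hpθ']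
  have hg_morrey : ∀ z s, 0 < s →
      ∫⁻ w in ball z s, g w ≤ Ch * ENNReal.ofReal (A ^ p₀ * s ^ ((d : ℝ) - p₀ * α)) := by
    intro z s hs
    have h1 := lintegral_rpow_le volume (f := fun w => ENNReal.ofReal (b w ^ p))
      hbpmeas.aemeasurable hθ'0 hθ'1 (ball z s)
    rw [show (∫⁻ w in ball z s, (ENNReal.ofReal (b w ^ p)) ^ θ') = ∫⁻ w in ball z s, g w from
      lintegral_congr fun w => by rw [hgof w]] at h1
    refine h1.trans ?_
    have hXnn : (0:ℝ) ≤ A ^ p * s ^ ((d : ℝ) - p * α) :=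
      mul_nonneg (Real.rpow_nonneg hA p) (Real.rpow_nonneg hs.le _)
    have hreal : (A ^ p * s ^ ((d : ℝ) - p * α)) ^ θ' * ((s : ℝ) ^ d) ^ (1 - θ') =
        A ^ p₀ * s ^ ((d : ℝ) - p₀ * α) := by
      rw [Real.mul_rpow (Real.rpow_nonneg hA p) (Real.rpow_nonneg hs.le _),
        ← Real.rpow_mul hA, hpθ', ← Real.rpow_natCast s d, ← Real.rpow_mul hs.le,
        ← Real.rpow_mul hs.le, mul_assoc, ← Real.rpow_add hs]
      congr 2
      have : ((d : ℝ) - p * α) * θ' + (d : ℝ) * (1 - θ') = (d : ℝ) - (p * θ') * α := by ring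
      rw [this, hpθ']
    calc (∫⁻ w in ball z s, ENNReal.ofReal (b w ^ p)) ^ θ' * (volume (ball z s)) ^ (1 - θ')
        ≤ (ENNReal.ofReal (A ^ p * s ^ ((d : ℝ) - p * α))) ^ θ' *
            (ENNReal.ofReal (s ^ d) * c) ^ (1 - θ') := by
          rw [vol_ball z hs]
          exact mul_le_mul' (ENNReal.rpow_le_rpow (hMor z s hs) hθ'0.le) le_rfl
      _ = ENNReal.ofReal ((A ^ p * s ^ ((d : ℝ) - p * α)) ^ θ') *
            (ENNReal.ofReal ((s ^ d : ℝ) ^ (1 - θ')) * Ch) := by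
          rw [ENNReal.mul_rpow_of_nonneg _ _ (by linarith : (0:ℝ) ≤ 1 - θ'),
            ENNReal.ofReal_rpow_of_nonneg hXnn hθ'0.le,
            ENNReal.ofReal_rpow_of_nonneg (by positivity : (0:ℝ) ≤ (s:ℝ) ^ d)
              (by linarith : (0:ℝ) ≤ 1 - θ')]
      _ = Ch * ENNReal.ofReal (A ^ p₀ * s ^ ((d : ℝ) - p₀ * α)) := by
          rw [← mul_assoc, ← ENNReal.ofReal_mul (by positivity), hreal, mul_comm]
  set g₁ : EuclideanSpace ℝ (Fin d) → ℝ≥0∞ := (ball x (3 * ρ)).indicator g with hg₁def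
  have hg₁meas : Measurable g₁ := hgmeas.indicator measurableSet_ball
  have hI₁le : ∫⁻ y, g₁ y ≤ Ch * ENNReal.ofReal (A ^ p₀ * (3 * ρ) ^ ((d : ℝ) - p₀ * α)) := by
    rw [hg₁def]
    rw [lintegral_indicator measurableSet_ball g]
    exact hg_morrey x (3 * ρ) (by positivity)
  have hI₁t : ∫⁻ y, g₁ y ≠ ∞ :=
    ne_top_of_le_ne_top (ENNReal.mul_ne_top hCht ENNReal.ofReal_ne_top) hI₁le
  have hlbase : (0:ℝ) < A ^ p₀ * ρ ^ (-(p₀ * α)) :=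
    mul_pos (Real.rpow_pos_of_pos hApos p₀) (Real.rpow_pos_of_pos hρ _)
  set l : ℝ≥0∞ := ENNReal.ofReal (A ^ p₀ * ρ ^ (-(p₀ * α))) with hldef
  have hl0 : l ≠ 0 := (ENNReal.ofReal_pos.2 hlbase).ne'
  have hlt : l ≠ ∞ := ENNReal.ofReal_ne_top
  -- pointwise splitting
  have hsplit : ∀ y ∈ ball x ρ, maxFun g y ≤ maxFun g₁ y + Ch * c⁻¹ * l := by
    intro y hy
    rw [maxFun]
    refine iSup_le fun z => iSup_le fun s => iSup_le fun hys => ?_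
    have hs : 0 < s := pos_of_mem_ball hys
    rcases le_or_gt s ρ with hsρ | hsρ
    · -- small ball: contained in ball x (3ρ)
      have hsub : ball z s ⊆ ball x (3 * ρ) := by
        intro w hw
        have h1 : dist w z < s := mem_ball.1 hw
        have h2 : dist y z < s := mem_ball.1 hys
        have h3 : dist y x < ρ := mem_ball.1 hy
        have h4 : dist w x ≤ dist w z + dist z y + dist y x := dist_triangle4 w z y x
        have h5 : dist z y = dist y z := dist_comm z y
        rw [mem_ball]
        linarith
      have heq : ∫⁻ w in ball z s, g w = ∫⁻ w in ball z s, g₁ w :=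
        setLIntegral_congr_fun measurableSet_ball
          (fun w hw => (Set.indicator_of_mem (hsub hw) g).symm)
      refine le_trans ?_ le_self_add
      rw [heq]
      exact avg_le_maxFun g₁ hys
    · -- big ball: use the Morrey bound
      refine le_trans ?_ le_add_self
      have hub := hg_morrey z s hs
      have hv0 : ENNReal.ofReal (s ^ d) ≠ 0 := by
        simp only [ne_eq, ENNReal.ofReal_eq_zero, not_le]
        positivity
      have hvt : ENNReal.ofReal (s ^ d) ≠ ∞ := ENNReal.ofReal_ne_top
      have hsplitpow : A ^ p₀ * s ^ ((d : ℝ) - p₀ * α) =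
          (A ^ p₀ * s ^ (-(p₀ * α))) * s ^ (d : ℝ) := by
        rw [mul_assoc, ← Real.rpow_add hs]
        ring_nf
      calc (∫⁻ w in ball z s, g w) / volume (ball z s)
          ≤ (Ch * ENNReal.ofReal (A ^ p₀ * s ^ ((d : ℝ) - p₀ * α))) /
              (ENNReal.ofReal (s ^ d) * c) := by
            rw [vol_ball z hs]
            exact ENNReal.div_le_div hub le_rfl
        _ = Ch * c⁻¹ * ENNReal.ofReal (A ^ p₀ * s ^ (-(p₀ * α))) := by
            rw [hsplitpow, ENNReal.ofReal_mul (by positivity), div_eq_mul_inv,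
              ENNReal.mul_inv (Or.inl hv0) (Or.inl hvt)]
            rw [Real.rpow_natCast]
            calc Ch * (ENNReal.ofReal (A ^ p₀ * s ^ (-(p₀ * α))) * ENNReal.ofReal (s ^ d)) *
                ((ENNReal.ofReal (s ^ d))⁻¹ * c⁻¹) =
                Ch * c⁻¹ * ENNReal.ofReal (A ^ p₀ * s ^ (-(p₀ * α))) *
                  (ENNReal.ofReal (s ^ d) * (ENNReal.ofReal (s ^ d))⁻¹) := by ring
              _ = _ := by rw [ENNReal.mul_inv_cancel hv0 hvt, mul_one]
        _ ≤ Ch * c⁻¹ * l := by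
            rw [hldef]
            refine mul_le_mul_right (ENNReal.ofReal_le_ofReal ?_) _
            refine mul_le_mul_of_nonneg_left ?_ (Real.rpow_nonneg hA p₀)
            exact Real.rpow_le_rpow_of_nonpos hρ hsρ.le (by nlinarith)
  -- final integration
  set X : ℝ := A ^ p₁ * ρ ^ ((d : ℝ) - p₁ * α) with hXdef
  have hXnn : 0 ≤ X := mul_nonneg (Real.rpow_nonneg hA p₁) (Real.rpow_nonneg hρ.le _)
  have hXeq : A ^ p₁ * ρ ^ (-(p₁ * α)) * ρ ^ (d : ℝ) = X := by
    rw [hXdef, mul_assoc, ← Real.rpow_add hρ]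
    congr 2
    ring
  have hlθ : l ^ θ = ENNReal.ofReal (A ^ p₁ * ρ ^ (-(p₁ * α))) := by
    rw [hldef, ENNReal.ofReal_rpow_of_pos hlbase]
    congr 1
    rw [Real.mul_rpow (Real.rpow_nonneg hA p₀) (Real.rpow_nonneg hρ.le _),
      ← Real.rpow_mul hA, ← Real.rpow_mul hρ.le, hp0θ]
    congr 2
    rw [← hp0θ]
    ring
  have hlθ1 : l ^ (θ - 1) = ENNReal.ofReal ((A ^ p₀ * ρ ^ (-(p₀ * α))) ^ (θ - 1)) := by
    rw [hldef, ENNReal.ofReal_rpow_of_pos hlbase]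
  have hvol : volume (ball x ρ) = ENNReal.ofReal (ρ ^ d) * c := vol_ball x hρ
  have hρd : ENNReal.ofReal (ρ ^ d) = ENNReal.ofReal (ρ ^ (d : ℝ)) := by
    rw [Real.rpow_natCast]
  have hterm1 : l ^ θ * volume (ball x ρ) = c * ENNReal.ofReal X := by
    rw [hlθ, hvol, hρd, ← mul_assoc, ← ENNReal.ofReal_mul (by positivity), hXeq, mul_comm]
  have hterm3 : (Ch * c⁻¹ * l) ^ θ * volume (ball x ρ) =
      Ch ^ θ * (c⁻¹) ^ θ * c * ENNReal.ofReal X := by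
    rw [ENNReal.mul_rpow_of_nonneg _ _ hθ0.le, ENNReal.mul_rpow_of_nonneg _ _ hθ0.le,
      hlθ, hvol, hρd]
    calc Ch ^ θ * (c⁻¹) ^ θ * ENNReal.ofReal (A ^ p₁ * ρ ^ (-(p₁ * α))) *
          (ENNReal.ofReal (ρ ^ (d : ℝ)) * c) =
        Ch ^ θ * (c⁻¹) ^ θ * c *
          (ENNReal.ofReal (A ^ p₁ * ρ ^ (-(p₁ * α))) * ENNReal.ofReal (ρ ^ (d : ℝ))) := by ring
      _ = _ := by rw [← ENNReal.ofReal_mul (by positivity), hXeq]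
  have hreal2 : A ^ p₀ * (3 * ρ) ^ ((d : ℝ) - p₀ * α) * (A ^ p₀ * ρ ^ (-(p₀ * α))) ^ (θ - 1) =
      (3 : ℝ) ^ ((d : ℝ) - p₀ * α) * X := by
    have hAexp : A ^ p₀ * A ^ (p₀ * (θ - 1)) = A ^ p₁ := by
      rw [← Real.rpow_add hApos]
      congr 1
      rw [← hp0θ]
      ring
    have hρexp : ρ ^ ((d : ℝ) - p₀ * α) * ρ ^ (-(p₀ * α) * (θ - 1)) = ρ ^ ((d : ℝ) - p₁ * α) := by
      rw [← Real.rpow_add hρ]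
      congr 1
      rw [← hp0θ]
      ring
    rw [Real.mul_rpow (by norm_num : (0:ℝ) ≤ 3) hρ.le,
      Real.mul_rpow (Real.rpow_nonneg hA p₀) (Real.rpow_nonneg hρ.le _),
      ← Real.rpow_mul hA, ← Real.rpow_mul hρ.le]
    calc A ^ p₀ * ((3:ℝ) ^ ((d : ℝ) - p₀ * α) * ρ ^ ((d : ℝ) - p₀ * α)) *
          (A ^ (p₀ * (θ - 1)) * ρ ^ (-(p₀ * α) * (θ - 1))) =
        (3:ℝ) ^ ((d : ℝ) - p₀ * α) * ((A ^ p₀ * A ^ (p₀ * (θ - 1))) *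
          (ρ ^ ((d : ℝ) - p₀ * α) * ρ ^ (-(p₀ * α) * (θ - 1)))) := by ring
      _ = _ := by rw [hAexp, hρexp, hXdef]
  have hterm2 : Cd2 * (∫⁻ y, g₁ y) * l ^ (θ - 1) ≤
      Cd2 * Ch * ENNReal.ofReal ((3:ℝ) ^ ((d : ℝ) - p₀ * α)) * ENNReal.ofReal X := by
    calc Cd2 * (∫⁻ y, g₁ y) * l ^ (θ - 1)
        ≤ Cd2 * (Ch * ENNReal.ofReal (A ^ p₀ * (3 * ρ) ^ ((d : ℝ) - p₀ * α))) * l ^ (θ - 1) := by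
          gcongr
      _ = Cd2 * Ch * (ENNReal.ofReal (A ^ p₀ * (3 * ρ) ^ ((d : ℝ) - p₀ * α)) *
            ENNReal.ofReal ((A ^ p₀ * ρ ^ (-(p₀ * α))) ^ (θ - 1))) := by
          rw [hlθ1]; ring
      _ = _ := by
          rw [← ENNReal.ofReal_mul (by positivity : (0:ℝ) ≤ A ^ p₀ * (3 * ρ) ^ ((d : ℝ) - p₀ * α)),
            hreal2,
            ENNReal.ofReal_mul (by positivity : (0:ℝ) ≤ (3:ℝ) ^ ((d : ℝ) - p₀ * α)),
            ← mul_assoc]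
  calc ∫⁻ y in ball x ρ, (maxFun g y) ^ θ
      ≤ ∫⁻ y in ball x ρ, (maxFun g₁ y + Ch * c⁻¹ * l) ^ θ :=
        setLIntegral_mono' measurableSet_ball fun y hy =>
          ENNReal.rpow_le_rpow (hsplit y hy) hθ0.le
    _ ≤ ∫⁻ y in ball x ρ, ((maxFun g₁ y) ^ θ + (Ch * c⁻¹ * l) ^ θ) :=
        lintegral_mono fun y => ENNReal.rpow_add_le_add_rpow _ _ hθ0.le hθ1.le
    _ = (∫⁻ y in ball x ρ, (maxFun g₁ y) ^ θ) + (Ch * c⁻¹ * l) ^ θ * volume (ball x ρ) := by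
        rw [lintegral_add_right _ measurable_const, setLIntegral_const]
    _ ≤ (l ^ θ * volume (ball x ρ) +
          Cd2 * (∫⁻ y, g₁ y) * l ^ (θ - 1)) + (Ch * c⁻¹ * l) ^ θ * volume (ball x ρ) := by
        gcongr
        exact kolmogorov hd g₁ hg₁meas hI₁t hθ0 hθ1 measurableSet_ball hl0 hlt
    _ ≤ (c * ENNReal.ofReal X +
          Cd2 * Ch * ENNReal.ofReal ((3:ℝ) ^ ((d : ℝ) - p₀ * α)) * ENNReal.ofReal X) +
          Ch ^ θ * (c⁻¹) ^ θ * c * ENNReal.ofReal X := by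
        rw [hterm1, hterm3]
        exact add_le_add (add_le_add le_rfl hterm2) le_rfl
    _ = Cfin * ENNReal.ofReal X := by
        rw [hCfindef]
        ring
    _ ≤ ENNReal.ofReal (Cfin.toReal + 1) * ENNReal.ofReal X := by
        refine mul_le_mul_left ?_ _
        conv_lhs => rw [← ENNReal.ofReal_toReal hCfint]
        exact ENNReal.ofReal_le_ofReal (by linarith)
    _ = ENNReal.ofReal ((Cfin.toReal + 1) * ρ ^ ((d : ℝ) - p₁ * α) * A ^ p₁) := by
        rw [← ENNReal.ofReal_mul (by positivity), hXdef]
        congr 1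
        ring
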